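/- In a 2-category, a 1-cell u : A → B admits a left adjoint f : B → A with counit ε : f∘u ⇒ id_A if and only if the triangle with top u : A → B, right edge f : B → A, bottom identity id_A : A → A, and 2-cell ε exhibits u as an absolute right lifting of id_A through f. -/

import Mathlib

open CategoryTheory CategoryTheory.Bicategory

universe w v u

variable {B : Type u} [Bicategory.{w, v} B] [Bicategory.Strict B]

/-- In a strict 2-category, a 2-cell `lam : h ≫ f ⟶ k` exhibits `(h, lam)` as an *absolute
right lifting* of `k` through `f` if pasting with it gives a bijection between 2-cells
`b ⟶ c ≫ h` and 2-cells `b ≫ f ⟶ c ≫ k`, for all `c`, `b`. -/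
def IsAbsRightLifting {A D Bb : B} (f : A ⟶ Bb) (k : D ⟶ Bb) (h : D ⟶ A)
    (lam : h ≫ f ⟶ k) : Prop :=
  ∀ (X : B) (c : X ⟶ D) (b : X ⟶ A) (α : b ≫ f ⟶ c ≫ k),
    ∃! abar : b ⟶ c ≫ h, α = (abar ▷ f) ≫ (α_ c h f).hom ≫ (c ◁ lam)

/-- A 1-cell `u : A ⟶ B` admits a left adjoint `f` with counit `ε : u ≫ f ⟶ 𝟙 A` if and only
if `ε` exhibits `u` as an absolute right lifting of the identity `𝟙 A` through `f`. -/
theorem leftAdjoint_iff_absRightLifting {A Bb : B} (u : A ⟶ Bb) (f : Bb ⟶ A)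
    (ε' : u ≫ f ⟶ 𝟙 A) :
    (∃ adj : Bicategory.Adjunction f u, adj.counit = ε') ↔
      IsAbsRightLifting f (𝟙 A) u ε' := by
  constructor
  · rintro ⟨adj, rfl⟩
    intro X c b α
    refine ⟨𝟙 b ⊗≫ b ◁ adj.unit ⊗≫ α ▷ u ⊗≫ 𝟙 (c ≫ u), ?_, ?_⟩
    · calc α = 𝟙 _ ⊗≫ b ◁ ((λ_ f).hom ≫ (ρ_ f).inv) ⊗≫ α ▷ 𝟙 A ⊗≫ 𝟙 _ := by
            bicategory
        _ = 𝟙 _ ⊗≫ b ◁ (leftZigzag adj.unit adj.counit) ⊗≫ α ▷ 𝟙 A ⊗≫ 𝟙 _ := by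
            rw [adj.left_triangle]
        _ = 𝟙 _ ⊗≫ (b ◁ adj.unit) ▷ f ⊗≫ ((b ≫ f) ◁ adj.counit ≫ α ▷ 𝟙 A) ⊗≫ 𝟙 _ := by
            dsimp only [leftZigzag]; bicategory
        _ = 𝟙 _ ⊗≫ (b ◁ adj.unit) ▷ f ⊗≫ (α ▷ (u ≫ f) ≫ (c ≫ 𝟙 A) ◁ adj.counit) ⊗≫ 𝟙 _ := by
            rw [whisker_exchange]
        _ = ((𝟙 b ⊗≫ b ◁ adj.unit ⊗≫ α ▷ u ⊗≫ 𝟙 (c ≫ u)) ▷ f) ≫ (α_ c u f).hom ≫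
              (c ◁ adj.counit) := by bicategory
    · intro a ha
      rw [ha]
      symm
      calc 𝟙 b ⊗≫ b ◁ adj.unit ⊗≫
              ((a ▷ f ≫ (α_ c u f).hom ≫ c ◁ adj.counit) ▷ u) ⊗≫ 𝟙 (c ≫ u)
          = 𝟙 _ ⊗≫ (b ◁ adj.unit ≫ a ▷ (f ≫ u)) ⊗≫ (c ◁ adj.counit) ▷ u ⊗≫ 𝟙 _ := by
            bicategory
        _ = 𝟙 _ ⊗≫ (a ▷ 𝟙 Bb ≫ (c ≫ u) ◁ adj.unit) ⊗≫ (c ◁ adj.counit) ▷ u ⊗≫ 𝟙 _ := by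
            rw [← whisker_exchange]
        _ = 𝟙 _ ⊗≫ a ▷ 𝟙 Bb ⊗≫ c ◁ (rightZigzag adj.unit adj.counit) ⊗≫ 𝟙 _ := by
            dsimp only [rightZigzag]; bicategory
        _ = 𝟙 _ ⊗≫ a ▷ 𝟙 Bb ⊗≫ c ◁ ((ρ_ u).hom ≫ (λ_ u).inv) ⊗≫ 𝟙 _ := by
            rw [adj.right_triangle]
        _ = a := by bicategory
  · intro H
    obtain ⟨η₀, hη₀, -⟩ := H Bb f (𝟙 Bb) ((λ_ f).hom ≫ (ρ_ f).inv)
    have lt : leftZigzag η₀ ε' = (λ_ f).hom ≫ (ρ_ f).inv := by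
      rw [hη₀]; dsimp only [leftZigzag]; bicategory
    obtain ⟨a₀, ha₀, hu⟩ := H A (𝟙 A) u (ε' ≫ (λ_ (𝟙 A)).inv)
    have h1 : (λ_ u).inv = a₀ := hu _ (by bicategory)
    have h2 : (𝟙 u ⊗≫ u ◁ η₀ ⊗≫ ε' ▷ u ⊗≫ 𝟙 (𝟙 A ≫ u)) = a₀ := by
      refine hu _ ?_
      show _ = _
      symm
      calc ((𝟙 u ⊗≫ u ◁ η₀ ⊗≫ ε' ▷ u ⊗≫ 𝟙 (𝟙 A ≫ u)) ▷ f) ≫ (α_ (𝟙 A) u f).hom ≫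
              (𝟙 A ◁ ε')
          = 𝟙 _ ⊗≫ u ◁ (η₀ ▷ f) ⊗≫ (ε' ▷ (u ≫ f) ≫ 𝟙 A ◁ ε') ⊗≫ 𝟙 _ := by bicategory
        _ = 𝟙 _ ⊗≫ u ◁ (η₀ ▷ f) ⊗≫ ((u ≫ f) ◁ ε' ≫ ε' ▷ 𝟙 A) ⊗≫ 𝟙 _ := by
            rw [whisker_exchange]
        _ = 𝟙 _ ⊗≫ u ◁ (leftZigzag η₀ ε') ⊗≫ ε' ▷ 𝟙 A ⊗≫ 𝟙 _ := by
            dsimp only [leftZigzag]; bicategory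
        _ = 𝟙 _ ⊗≫ u ◁ ((λ_ f).hom ≫ (ρ_ f).inv) ⊗≫ ε' ▷ 𝟙 A ⊗≫ 𝟙 _ := by rw [lt]
        _ = ε' ≫ (λ_ (𝟙 A)).inv := by bicategory
    have rt : rightZigzag η₀ ε' = (ρ_ u).hom ≫ (λ_ u).inv := by
      calc rightZigzag η₀ ε'
          = (ρ_ u).hom ≫ (𝟙 u ⊗≫ u ◁ η₀ ⊗≫ ε' ▷ u ⊗≫ 𝟙 (𝟙 A ≫ u)) := by
            dsimp only [rightZigzag]; bicategory
        _ = (ρ_ u).hom ≫ (λ_ u).inv := by rw [h2, ← h1]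
    exact ⟨⟨η₀, ε', lt, rt⟩, rfl⟩
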